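/- For all 1 ≤ n ≤ L−1, the following identity of rational functions in ℂ(x, t_1, …, t_{L−1}) holds: (t_n / (t_n − t_{n−1})) · f_n^{x}(t) = (1/(x−1)) · (f_0(t) − Σ_{m=1}^{n} f_m^{x}(t) − x Σ_{m=n+1}^{L−1} f_m^{x}(t)). In particular (the telescoping identity used for n = 1): (t_1/(t_1 − 1)) f_1^{x}(t) = (1/(x−1)) (f_0(t) − f_1^{x}(t) − x Σ_{m=2}^{L−1} f_m^{x}(t)). -/

import Mathlib

/-!
Statement 18: the telescoping identity
`(t_n/(t_n − t_{n−1})) · f_n^x = (1/(x−1)) (f_0 − Σ_{m=1}^n f_m^x − x Σ_{m=n+1}^{L−1} f_m^x)`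
in the rational function field `ℂ(x, t_1, …, t_{L−1})` (with `t_0 = 1`), stated
for arbitrary complex values of the indeterminates at which all the occurring
denominators are nonzero.
-/

noncomputable section

/-- `f₀(t)` (with the convention that `t 0` plays the role of `t₀ = 1`). -/
def g0 (L : ℕ) (t : ℕ → ℂ) : ℂ :=
  ∏ m ∈ Finset.Icc 1 (L - 1), (t (m - 1) - t m)⁻¹

/-- `f_n^x(t)`. -/
def gP (L : ℕ) (x : ℂ) (n : ℕ) (t : ℕ → ℂ) : ℂ :=
  (1 - x * t (L - 1))⁻¹ *
    ∏ m ∈ (Finset.Icc 1 (L - 1)).erase n, (t (m - 1) - t m)⁻¹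

lemma telescope (t : ℕ → ℂ) (a b : ℕ) (h : a ≤ b) :
    ∑ m ∈ Finset.Ioc a b, (t (m - 1) - t m) = t a - t b := by
  induction b, h using Nat.le_induction with
  | base => simp
  | succ b hab ih =>
    rw [Finset.sum_Ioc_succ_top (by omega), ih]
    have h1 : b + 1 - 1 = b := rfl
    rw [h1]; ring

lemma gP_eq (L : ℕ) (x : ℂ) (t : ℕ → ℂ)
    (hadj : ∀ m, 1 ≤ m → m ≤ L - 1 → t (m - 1) ≠ t m)
    (n : ℕ) (hn : n ∈ Finset.Icc 1 (L - 1)) :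
    gP L x n t = (1 - x * t (L - 1))⁻¹ * ((t (n - 1) - t n) * g0 L t) := by
  simp only [Finset.mem_Icc] at hn
  have hne : t (n - 1) - t n ≠ 0 :=
    sub_ne_zero.mpr (hadj n hn.1 hn.2)
  unfold gP g0
  congr 1
  rw [← Finset.mul_prod_erase _ (fun m => (t (m - 1) - t m)⁻¹)
        (Finset.mem_Icc.mpr hn), ← mul_assoc, mul_inv_cancel₀ hne, one_mul]

theorem stmt18 (L : ℕ) (hL : 2 ≤ L) (t : ℕ → ℂ) (x : ℂ)
    (ht0 : t 0 = 1)
    (hadj : ∀ m, 1 ≤ m → m ≤ L - 1 → t (m - 1) ≠ t m)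
    (hxt : 1 - x * t (L - 1) ≠ 0)
    (hx1 : x ≠ 1) :
    (∀ n, 1 ≤ n → n ≤ L - 1 →
      t n / (t n - t (n - 1)) * gP L x n t
        = 1 / (x - 1) *
            (g0 L t - (∑ m ∈ Finset.Icc 1 n, gP L x m t)
              - x * ∑ m ∈ Finset.Icc (n + 1) (L - 1), gP L x m t))
    ∧
    (t 1 / (t 1 - 1) * gP L x 1 t
      = 1 / (x - 1) *
          (g0 L t - gP L x 1 t - x * ∑ m ∈ Finset.Icc 2 (L - 1), gP L x m t)) := by
  have main : ∀ n, 1 ≤ n → n ≤ L - 1 →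
      t n / (t n - t (n - 1)) * gP L x n t
        = 1 / (x - 1) *
            (g0 L t - (∑ m ∈ Finset.Icc 1 n, gP L x m t)
              - x * ∑ m ∈ Finset.Icc (n + 1) (L - 1), gP L x m t) := by
    intro n hn1 hn2
    have hsum1 : ∑ m ∈ Finset.Icc 1 n, gP L x m t
        = (1 - x * t (L - 1))⁻¹ * ((1 - t n) * g0 L t) := by
      rw [Finset.sum_congr rfl (fun m hm => gP_eq L x t hadj m
        (Finset.mem_Icc.mpr ⟨(Finset.mem_Icc.mp hm).1,
          le_trans (Finset.mem_Icc.mp hm).2 hn2⟩))]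
      rw [← Finset.mul_sum, ← Finset.sum_mul, (show Finset.Icc 1 n = Finset.Ioc 0 n from Finset.Icc_add_one_left_eq_Ioc 0 n),
        telescope t 0 n (Nat.zero_le n), ht0]
    have hsum2 : ∑ m ∈ Finset.Icc (n + 1) (L - 1), gP L x m t
        = (1 - x * t (L - 1))⁻¹ * ((t n - t (L - 1)) * g0 L t) := by
      rw [Finset.sum_congr rfl (fun m hm => gP_eq L x t hadj m
        (Finset.mem_Icc.mpr ⟨le_trans (Nat.le_add_left 1 n) (Finset.mem_Icc.mp hm).1,
          (Finset.mem_Icc.mp hm).2⟩))]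
      rw [← Finset.mul_sum, ← Finset.sum_mul, Finset.Icc_add_one_left_eq_Ioc,
        telescope t n (L - 1) hn2]
    have hgn : gP L x n t = (1 - x * t (L - 1))⁻¹ * ((t (n - 1) - t n) * g0 L t) :=
      gP_eq L x t hadj n (Finset.mem_Icc.mpr ⟨hn1, hn2⟩)
    have hne : t n - t (n - 1) ≠ 0 :=
      sub_ne_zero.mpr (Ne.symm (hadj n hn1 hn2))
    have hx : x - 1 ≠ 0 := sub_ne_zero.mpr hx1
    rw [hsum1, hsum2, hgn]
    field_simp
    ring
  refine ⟨main, ?_⟩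
  have h := main 1 le_rfl (by omega)
  simpa [Finset.Icc_self, ht0] using h
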